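/- Let α₁,…,αₙ, β₁,…,βₙ be positive reals with αᵢ ≠ βⱼ for all i,j, and suppose max{αᵢ, βⱼ : i,j} > 2. Then the function g(z) = ∏_{i=1}^n (z^{αᵢ} − 1)/(z^{βᵢ} − 1) cannot be both holomorphic and zero-free on the open upper half-plane. More precisely: if some αᵢ > 2 then g has a zero in the upper half-plane at e^{iπ/αᵢ} unless some βⱼ ≥ αᵢ; and if some βⱼ > 2 then g has a pole (non-removable singularity) at e^{iπ/βⱼ} unless some αₖ ≥ βⱼ; hence under αᵢ ≠ βⱼ for all i,j, no zero-free holomorphic extension exists. -/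

import Mathlib

open Complex Filter

lemma aux_cpow_exp (w c : ℂ) (h1 : -Real.pi < w.im) (h2 : w.im ≤ Real.pi) :
    Complex.exp w ^ c = Complex.exp (c * w) := by
  rw [Complex.cpow_def_of_ne_zero (Complex.exp_ne_zero w), Complex.log_exp h1 h2, mul_comm]

lemma aux_exp_ne_one_of_re (w : ℂ) (h : w.re ≠ 0) : Complex.exp w ≠ 1 := by
  intro he
  have h2 := congrArg norm he
  rw [Complex.norm_exp, norm_one, Real.exp_eq_one_iff] at h2
  exact h h2

lemma aux_exp_ne_one (t : ℝ) (h0 : 0 < t) (h1 : t < 2 * Real.pi) :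
    Complex.exp (↑t * Complex.I) ≠ 1 := by
  intro he
  rw [Complex.exp_eq_one_iff] at he
  obtain ⟨k, hk⟩ := he
  have him := congrArg Complex.im hk
  simp [Complex.mul_im, Complex.mul_re] at him
  rcases le_or_gt k 0 with h | h
  · have : (k : ℝ) ≤ 0 := by exact_mod_cast h
    nlinarith [Real.pi_pos]
  · have : (1 : ℝ) ≤ (k : ℝ) := by exact_mod_cast h
    nlinarith [Real.pi_pos]

theorem stmt9 (n : ℕ) (α β : Fin n → ℝ) (hα : ∀ i, 0 < α i) (hβ : ∀ i, 0 < β i)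
    (hne : ∀ i j, α i ≠ β j)
    (hmax : (∃ i, 2 < α i) ∨ (∃ j, 2 < β j)) :
    ¬ ∃ G : ℂ → ℂ, DifferentiableOn ℂ G {z : ℂ | 0 < z.im} ∧
        (∀ z ∈ {z : ℂ | 0 < z.im}, G z ≠ 0) ∧
        (∀ z ∈ {z : ℂ | 0 < z.im}, (∀ i, z ^ ((β i : ℝ) : ℂ) ≠ 1) →
          G z = ∏ i, (z ^ ((α i : ℝ) : ℂ) - 1) / (z ^ ((β i : ℝ) : ℂ) - 1)) := by
  rintro ⟨G, hGd, hGnz, hform⟩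
  obtain ⟨i0⟩ : Nonempty (Fin n) := by
    rcases hmax with ⟨i, _⟩ | ⟨i, _⟩ <;> exact ⟨i⟩
  set S : Finset ℝ := Finset.image α Finset.univ ∪ Finset.image β Finset.univ with hS
  have hSne : S.Nonempty := ⟨α i0, by simp [hS]⟩
  set M := S.max' hSne with hMdef
  have hαle : ∀ i, α i ≤ M := fun i => S.le_max' _ (by simp [hS])
  have hβle : ∀ i, β i ≤ M := fun i => S.le_max' _ (by simp [hS])
  have hM2 : 2 < M := by
    rcases hmax with ⟨i, hi⟩ | ⟨i, hi⟩
    exacts [lt_of_lt_of_le hi (hαle i), lt_of_lt_of_le hi (hβle i)]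
  have hM0 : 0 < M := by linarith
  have hpi := Real.pi_pos
  set θ := 2 * Real.pi / M with hθ
  have hθpos : 0 < θ := by positivity
  have hθlt : θ < Real.pi := by
    rw [hθ, div_lt_iff₀ hM0]; nlinarith
  set z₀ := Complex.exp (↑θ * Complex.I) with hz₀
  have hz₀im : 0 < z₀.im := by
    rw [hz₀, Complex.exp_ofReal_mul_I_im]
    exact Real.sin_pos_of_pos_of_lt_pi hθpos hθlt
  have hz₀mem : z₀ ∈ {z : ℂ | 0 < z.im} := hz₀im
  have hwim : ∀ s : ℝ, ((s : ℂ) + ↑θ * Complex.I).im = θ := by intro s; simp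
  have key : ∀ (s c : ℝ), (Complex.exp ((s : ℂ) + ↑θ * Complex.I)) ^ (c : ℂ)
      = Complex.exp (↑(c * s) + ↑(c * θ) * Complex.I) := by
    intro s c
    rw [aux_cpow_exp]
    · congr 1; push_cast; ring
    · rw [hwim]; linarith
    · rw [hwim]; exact le_of_lt hθlt
  have key0 : ∀ c : ℝ, z₀ ^ (c : ℂ) = Complex.exp (↑(c * θ) * Complex.I) := by
    intro c
    have h := key 0 c
    simpa using h
  have hne1 : ∀ c : ℝ, 0 < c → c < M → z₀ ^ (c : ℂ) ≠ 1 := by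
    intro c hc hcM
    rw [key0]
    apply aux_exp_ne_one
    · positivity
    · rw [hθ, mul_div_assoc', div_lt_iff₀ hM0]
      nlinarith
  have hMone : z₀ ^ (M : ℂ) = 1 := by
    rw [key0]
    have hMθ : M * θ = 2 * Real.pi := by rw [hθ]; field_simp
    rw [hMθ]
    rw [show ((2 * Real.pi : ℝ) : ℂ) * Complex.I = 2 * ↑Real.pi * Complex.I by push_cast; ring]
    exact Complex.exp_two_pi_mul_I
  have hMmem : (∃ i, α i = M) ∨ (∃ j, β j = M) := by
    have h := S.max'_mem hSne
    rw [← hMdef] at h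
    simpa only [hS, Finset.mem_union, Finset.mem_image, Finset.mem_univ, true_and] using h
  rcases hMmem with ⟨i, hiM⟩ | ⟨j, hjM⟩
  · -- α i = M : zero of the product
    have hβlt : ∀ j, β j < M := fun j =>
      lt_of_le_of_ne (hβle j) (fun h => hne i j (by rw [hiM, ← h]))
    have hd : ∀ j, z₀ ^ ((β j : ℝ) : ℂ) ≠ 1 := fun j => hne1 _ (hβ j) (hβlt j)
    have hGz := hform z₀ hz₀mem hd
    apply hGnz z₀ hz₀mem
    rw [hGz]
    apply Finset.prod_eq_zero (Finset.mem_univ i)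
    rw [hiM, hMone]
    simp
  · -- β j = M : pole of the product
    have hαlt : ∀ i, α i < M := fun i =>
      lt_of_le_of_ne (hαle i) (fun h => hne i j (by rw [hjM, h]))
    have hdenne : ∀ k, z₀ ^ ((α k : ℝ) : ℂ) - 1 ≠ 0 := fun k =>
      sub_ne_zero.mpr (hne1 _ (hα k) (hαlt k))
    set F : ℂ → ℂ := fun z => ∏ k, (z ^ ((β k : ℝ) : ℂ) - 1) / (z ^ ((α k : ℝ) : ℂ) - 1)
      with hF
    have hslit : z₀ ∈ Complex.slitPlane := Or.inr (ne_of_gt hz₀im)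
    have hcont : ContinuousAt F z₀ := by
      apply tendsto_finset_prod
      intro k _
      exact (((continuousAt_cpow_const hslit).sub continuousAt_const).div
        (((continuousAt_cpow_const hslit).sub continuousAt_const)) (hdenne k))
    have hFz₀ : F z₀ = 0 := by
      apply Finset.prod_eq_zero (Finset.mem_univ j)
      rw [hjM, hMone]
      simp
    set φ : ℝ → ℂ := fun s => Complex.exp ((s : ℂ) + ↑θ * Complex.I) with hφ
    have hφ0 : φ 0 = z₀ := by simp [hφ, hz₀]
    have hφcont : Continuous φ := by
      exact Complex.continuous_exp.comp (by continuity)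
    have hφtend : Tendsto φ (nhdsWithin 0 (Set.Ioi 0)) (nhds z₀) := by
      rw [← hφ0]
      exact (hφcont.continuousAt).tendsto.mono_left nhdsWithin_le_nhds
    have hφim : ∀ s : ℝ, 0 < (φ s).im := by
      intro s
      have : φ s = (Real.exp s : ℂ) * Complex.exp (↑θ * Complex.I) := by
        show Complex.exp ((s : ℂ) + ↑θ * Complex.I) = _
        rw [Complex.exp_add, Complex.ofReal_exp]
      rw [this]
      simp only [Complex.mul_im, Complex.ofReal_re, Complex.ofReal_im, zero_mul, add_zero,
        Complex.exp_ofReal_mul_I_im]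
      have := Real.sin_pos_of_pos_of_lt_pi hθpos hθlt
      positivity
    have hGφ : ∀ s ∈ Set.Ioi (0 : ℝ), (G (φ s))⁻¹ = F (φ s) := by
      intro s hs
      have hd : ∀ k, (φ s) ^ ((β k : ℝ) : ℂ) ≠ 1 := by
        intro k
        show Complex.exp ((s : ℂ) + ↑θ * Complex.I) ^ ((β k : ℝ) : ℂ) ≠ 1
        rw [key s (β k)]
        apply aux_exp_ne_one_of_re
        have hre : ((↑(β k * s) : ℂ) + ↑(β k * θ) * Complex.I).re = β k * s := by simp
        rw [hre]
        exact ne_of_gt (mul_pos (hβ k) hs)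
      rw [hform (φ s) (hφim s) hd, ← Finset.prod_inv_distrib]
      exact Finset.prod_congr rfl fun k _ => inv_div _ _
    have hopen : IsOpen {z : ℂ | 0 < z.im} := isOpen_lt continuous_const Complex.continuous_im
    have hGc : ContinuousAt G z₀ :=
      (hGd.differentiableAt (hopen.mem_nhds hz₀mem)).continuousAt
    have hG0 : G z₀ ≠ 0 := hGnz z₀ hz₀mem
    have h1 : Tendsto (fun s => (G (φ s))⁻¹) (nhdsWithin 0 (Set.Ioi 0)) (nhds (G z₀)⁻¹) :=
      (hGc.tendsto.comp hφtend).inv₀ hG0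
    have h3 : Tendsto (fun s => F (φ s)) (nhdsWithin 0 (Set.Ioi 0)) (nhds 0) := by
      rw [← hFz₀]
      exact hcont.tendsto.comp hφtend
    have hev : (fun s => F (φ s)) =ᶠ[nhdsWithin 0 (Set.Ioi 0)] fun s => (G (φ s))⁻¹ := by
      filter_upwards [self_mem_nhdsWithin] with s hs
      exact (hGφ s hs).symm
    have h2 : Tendsto (fun s => (G (φ s))⁻¹) (nhdsWithin 0 (Set.Ioi 0)) (nhds 0) :=
      h3.congr' hev
    have := tendsto_nhds_unique h1 h2
    exact hG0 (inv_eq_zero.mp this)
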